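/- For n ≥ 1, a subset S ⊆ {1,...,n} arises as the set of positions of occurrences of the consecutive pattern DF (a down step (1,−1) immediately followed by a flat step (1,0)) in some Łukasiewicz path of length n if and only if S ⊆ {2,...,n−1} and any two distinct elements of S differ by at least 2. -/

import Mathlib

/-- A Łukasiewicz path: vertical step components, each `≥ -1`, all partial sums
nonnegative, total sum `0`. -/
def IsLukas (w : List ℤ) : Prop :=
  (∀ s ∈ w, -1 ≤ s) ∧ (∀ k, 0 ≤ (w.take k).sum) ∧ w.sum = 0

/-- The set of (1-indexed) positions of occurrences of the consecutive pattern
`DF` in `w`: position `j` with step `j` down and step `j+1` flat. -/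
def dfPos (w : List ℤ) : Finset ℕ :=
  (Finset.Icc 1 w.length).filter fun j =>
    w[j - 1]? = some (-1) ∧ w[j]? = some 0

lemma sum_list_range_map (f : ℕ → ℤ) (n : ℕ) :
    ((List.range n).map f).sum = ∑ i ∈ Finset.range n, f i := by
  induction n with
  | zero => simp
  | succ n ih =>
    rw [List.range_succ, Finset.sum_range_succ, List.map_append]
    simp [ih]

/-- For `n ≥ 1`: `S ⊆ {1,…,n}` is the set of `DF`-positions of some Łukasiewicz
path of length `n` iff `S ⊆ {2,…,n-1}` and distinct elements of `S` differ by at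
least `2`. -/
theorem df_position_sets (n : ℕ) (hn : 1 ≤ n) :
    ∀ S : Finset ℕ, S ⊆ Finset.Icc 1 n →
      ((∃ w : List ℤ, IsLukas w ∧ w.length = n ∧ dfPos w = S) ↔
        (S ⊆ Finset.Icc 2 (n - 1) ∧
          ∀ i ∈ S, ∀ j ∈ S, i ≠ j → 2 ≤ Nat.dist i j)) := by
  intro S hS
  constructor
  · rintro ⟨w, hL, hlen, rfl⟩
    have hmem : ∀ j ∈ dfPos w, 1 ≤ j ∧ j ≤ n ∧
        w[j - 1]? = some (-1) ∧ w[j]? = some 0 := by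
      intro j hj
      rw [dfPos, Finset.mem_filter, Finset.mem_Icc, hlen] at hj
      exact ⟨hj.1.1, hj.1.2, hj.2.1, hj.2.2⟩
    constructor
    · intro j hj
      obtain ⟨h1, h2, hd, hf⟩ := hmem j hj
      rw [List.getElem?_eq_some_iff] at hf
      obtain ⟨hjlt, -⟩ := hf
      rw [hlen] at hjlt
      rw [Finset.mem_Icc]
      refine ⟨?_, by omega⟩
      by_contra h2'
      have hj1 : j = 1 := by omega
      subst hj1
      rw [List.getElem?_eq_some_iff] at hd
      obtain ⟨h0, hget⟩ := hd
      have := hL.2.1 1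
      rw [List.sum_take_succ w 0 h0, List.take_zero, List.sum_nil, zero_add] at this
      rw [hget] at this
      norm_num at this
    · intro i hi j hj hij
      by_contra hdist
      have hcase : j = i + 1 ∨ i = j + 1 := by
        simp [Nat.dist] at hdist; omega
      rcases hcase with h | h
      · obtain ⟨-, -, -, hf⟩ := hmem i hi
        obtain ⟨-, -, hd, -⟩ := hmem j hj
        rw [h] at hd
        simp only [Nat.add_sub_cancel] at hd
        rw [hf] at hd
        simp at hd
      · obtain ⟨-, -, -, hf⟩ := hmem j hj
        obtain ⟨-, -, hd, -⟩ := hmem i hi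
        rw [h] at hd
        simp only [Nat.add_sub_cancel] at hd
        rw [hf] at hd
        simp at hd
  · rintro ⟨hsub, hgap⟩
    classical
    set k : ℤ := (S.card : ℤ) with hk
    set f : ℕ → ℤ := fun i => if i = 0 then k else if i + 1 ∈ S then -1 else 0 with hf
    set w : List ℤ := (List.range n).map f with hw
    have hlen : w.length = n := by simp [hw]
    have hS2 : ∀ j ∈ S, 2 ≤ j ∧ j ≤ n - 1 := by
      intro j hj
      have := hsub hj
      rw [Finset.mem_Icc] at this
      exact this
    have h1S : (1 : ℕ) ∉ S := fun h => by have := hS2 1 h; omega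
    -- value of f
    have hfval : ∀ i, f i = (if i = 0 then k else 0) + (if i + 1 ∈ S then -1 else 0) := by
      intro i
      rcases eq_or_ne i 0 with rfl | h
      · simp [hf, h1S]
      · simp [hf, h]
    -- sum formula
    have hsum : ∀ m, ∑ i ∈ Finset.range m, f i =
        (if 0 < m then k else 0) -
          (((Finset.range m).filter (fun i => i + 1 ∈ S)).card : ℤ) := by
      intro m
      calc ∑ i ∈ Finset.range m, f i
          = (∑ i ∈ Finset.range m, if i = 0 then k else 0) +
            (∑ i ∈ Finset.range m, if i + 1 ∈ S then (-1 : ℤ) else 0) := by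
            rw [← Finset.sum_add_distrib]
            exact Finset.sum_congr rfl fun i _ => hfval i
        _ = (if 0 < m then k else 0) -
            (((Finset.range m).filter (fun i => i + 1 ∈ S)).card : ℤ) := by
            rw [Finset.sum_ite_eq' (Finset.range m) 0 (fun _ => k)]
            rw [Finset.sum_ite, Finset.sum_const, Finset.sum_const]
            simp [Finset.mem_range, sub_eq_add_neg]
    have hcard_le : ∀ m, ((Finset.range m).filter (fun i => i + 1 ∈ S)).card ≤ S.card := by
      intro m
      apply Finset.card_le_card_of_injOn (fun i => i + 1)
      · intro a ha
        simp only [Finset.mem_coe, Finset.mem_filter] at ha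
        exact ha.2
      · intro a _ b _ h
        have h' : a + 1 = b + 1 := h
        omega
    have hfilter_n : (Finset.range n).filter (fun i => i + 1 ∈ S) = S.image (· - 1) := by
      ext i
      simp only [Finset.mem_filter, Finset.mem_range, Finset.mem_image]
      constructor
      · rintro ⟨hi, hiS⟩
        exact ⟨i + 1, hiS, by omega⟩
      · rintro ⟨j, hj, rfl⟩
        have := hS2 j hj
        have hj1 : j - 1 + 1 = j := by omega
        rw [hj1]
        exact ⟨by omega, hj⟩
    have hcard_n : (((Finset.range n).filter (fun i => i + 1 ∈ S)).card : ℤ) = k := by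
      rw [hfilter_n, Finset.card_image_of_injOn, hk]
      intro a ha b hb h
      have := hS2 a ha
      have := hS2 b hb
      simp at h
      omega
    have hget : ∀ i, i < n → w[i]? = some (f i) := by
      intro i hi
      rw [hw, List.getElem?_map, List.getElem?_range hi]
      rfl
    have hget_none : ∀ i, n ≤ i → w[i]? = none := by
      intro i hi
      rw [List.getElem?_eq_none_iff, hlen]
      exact hi
    refine ⟨w, ⟨?_, ?_, ?_⟩, hlen, ?_⟩
    · -- all steps ≥ -1
      intro s hs
      rw [hw, List.mem_map] at hs
      obtain ⟨i, -, rfl⟩ := hs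
      rw [hfval i]
      have hk0 : (0:ℤ) ≤ k := by rw [hk]; positivity
      split <;> split <;> omega
    · -- partial sums nonneg
      intro m
      have : w.take m = (List.range (min m n)).map f := by
        rw [hw, ← List.map_take, List.take_range]
      rw [this, sum_list_range_map, hsum]
      have := hcard_le (min m n)
      split
      · rw [hk]
        have : (((Finset.range (min m n)).filter (fun i => i + 1 ∈ S)).card : ℤ)
            ≤ (S.card : ℤ) := by exact_mod_cast this
        omega
      · have hm0 : min m n = 0 := by omega
        simp [hm0]
    · -- total sum 0
      rw [hw, sum_list_range_map, hsum, hcard_n]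
      simp [Nat.lt_of_lt_of_le Nat.zero_lt_one hn]
    · -- dfPos w = S
      ext j
      rw [dfPos, Finset.mem_filter, Finset.mem_Icc, hlen]
      constructor
      · rintro ⟨⟨hj1, hjn⟩, hd, hflat⟩
        -- from hflat: j < n
        have hjlt : j < n := by
          by_contra h
          rw [hget_none j (by omega)] at hflat
          cases hflat
        have hj1lt : j - 1 < n := by omega
        rw [hget _ hj1lt] at hd
        have hfd : f (j - 1) = -1 := by
          injection hd
        rw [hf] at hfd
        simp only at hfd
        split at hfd
        · exfalso
          have : (0:ℤ) ≤ k := by rw [hk]; exact Int.natCast_nonneg _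
          omega
        · split at hfd
          · next _ hmem =>
            have : j - 1 + 1 = j := by omega
            rwa [this] at hmem
          · omega
      · intro hjS
        obtain ⟨hj2, hjn1⟩ := hS2 j hjS
        have hjlt : j < n := by omega
        have hj1lt : j - 1 < n := by omega
        refine ⟨⟨by omega, by omega⟩, ?_, ?_⟩
        · rw [hget _ hj1lt]
          congr 1
          rw [hfval (j - 1)]
          have h1 : j - 1 ≠ 0 := by omega
          have h2 : j - 1 + 1 = j := by omega
          rw [if_neg h1, h2, if_pos hjS]
          simp
        · rw [hget _ hjlt]
          congr 1
          rw [hfval j]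
          have h1 : j ≠ 0 := by omega
          have h2 : j + 1 ∉ S := by
            intro h
            have := hgap j hjS (j + 1) h (by omega)
            simp [Nat.dist] at this
          rw [if_neg h1, if_neg h2]
          simp
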